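/- arXiv:1807.07198 — 2 statements merged into one kernel-verified Lean document; each statement's English description precedes it below -/
import Mathlib

section
/- Let W_X be a Coxeter group of type A_n (the symmetric group on n+1 letters with its standard Coxeter generators x_1,…,x_n). Let Y_1, Y_2 ⊆ {x_1,…,x_n} and let ψ : Y_1 → Y_2 be an isomorphism of the induced labeled Coxeter graphs, i.e., a bijection with m_{ψ(y),ψ(y′)} = m_{y,y′} for all y, y′ ∈ Y_1. Then there exists v ∈ W_X such that v⁻¹ y v = ψ(y) for all y ∈ Y_1. -/
namespace ArtinTits

variable {B : Type*}

/-- The alternating product `a b a b ⋯` with `m` factors, starting with `a`. -/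
def altProd {G : Type*} [Monoid G] (a b : G) : ℕ → G
  | 0 => 1
  | n + 1 => a * altProd b a n

/-- The braid relations defining the Artin–Tits group of a Coxeter matrix:
`Π(σ_s, σ_t; m_{s,t}) = Π(σ_t, σ_s; m_{s,t})` whenever `m_{s,t} ≠ ∞` (here `∞` is coded by `0`). -/
def artinRelationsSet (M : CoxeterMatrix B) : Set (FreeGroup B) :=
  {r | ∃ s t : B, M s t ≠ 0 ∧
    r = altProd (FreeGroup.of s) (FreeGroup.of t) (M s t) *
        (altProd (FreeGroup.of t) (FreeGroup.of s) (M s t))⁻¹}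

/-- The Artin–Tits group of a Coxeter matrix. -/
abbrev ArtinGroup (M : CoxeterMatrix B) : Type _ := PresentedGroup (artinRelationsSet M)

/-- The standard generator `σ_s` of the Artin–Tits group. -/
def σ (M : CoxeterMatrix B) (s : B) : ArtinGroup M := PresentedGroup.of s

/-- The standard parabolic subgroup `A_X` of the Artin–Tits group. -/
def AP (M : CoxeterMatrix B) (X : Set B) : Subgroup (ArtinGroup M) :=
  Subgroup.closure (σ M '' X)

/-- The standard parabolic subgroup `W_X` of the Coxeter group. -/
def WP (M : CoxeterMatrix B) (X : Set B) : Subgroup M.Group :=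
  Subgroup.closure (M.simple '' X)

/-- A subgroup `H ≤ G` is conjugacy stable if any two elements of `H` which are conjugate
in `G` are already conjugate by an element of `H`. -/
def IsConjugacyStable {G : Type*} [Group G] (H : Subgroup G) : Prop :=
  ∀ a b : G, a ∈ H → b ∈ H → (∃ g : G, g⁻¹ * a * g = b) → ∃ h ∈ H, h⁻¹ * a * h = b

/-- Property `⋆_W` for the pair `(W_X, W_S)`. -/
def StarW (M : CoxeterMatrix B) (X : Set B) : Prop :=
  ∀ Y₁ Y₂ : Set B, Y₁ ⊆ X → Y₂ ⊆ X → ∀ w : M.Group,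
    (fun x => w⁻¹ * x * w) '' (M.simple '' Y₁) = M.simple '' Y₂ →
    ∃ v ∈ WP M X, ∀ y ∈ Y₁, v⁻¹ * M.simple y * v = w⁻¹ * M.simple y * w

/-- Property `⋆_A` for the pair `(A_X, A_S)`. -/
def StarA (M : CoxeterMatrix B) (X : Set B) : Prop :=
  ∀ Y₁ Y₂ : Set B, Y₁ ⊆ X → Y₂ ⊆ X → ∀ g : ArtinGroup M,
    (fun x => g⁻¹ * x * g) '' (σ M '' Y₁) = σ M '' Y₂ →
    ∃ h ∈ AP M X, ∀ y ∈ Y₁, h⁻¹ * σ M y * h = g⁻¹ * σ M y * g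

/-- Adjacency in the Coxeter graph: `s` and `t` are joined by an edge iff `m_{s,t} ≥ 3`
(where the value `0` codes `∞`, which also gives an edge). -/
def Adj (M : CoxeterMatrix B) (s t : B) : Prop := s ≠ t ∧ M s t ≠ 2

/-- `s` and `t` are connected by a path of the Coxeter graph staying inside `X`. -/
def ReachIn (M : CoxeterMatrix B) (X : Set B) (s t : B) : Prop :=
  Relation.ReflTransGen (fun a b => a ∈ X ∧ b ∈ X ∧ Adj M a b) s t

/-- The Coxeter graph induced on `X` is connected. -/
def ConnectedIn (M : CoxeterMatrix B) (X : Set B) : Prop :=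
  ∀ s ∈ X, ∀ t ∈ X, ReachIn M X s t

/-- The Coxeter matrix `M` restricted to `X` is of the type of the Coxeter matrix `M'`,
i.e. there is a bijection transporting one to the other. -/
def IsOfType {B' : Type*} (M : CoxeterMatrix B) (X : Set B) (M' : CoxeterMatrix B') : Prop :=
  ∃ e : X ≃ B', ∀ a b : X, M a.val b.val = M' (e a) (e b)

/-- The Coxeter matrix of type `Bₙ` with the paper's labelling: vertices `0, …, n-1`
(representing `s_1, …, s_n`), `m_{s_1, s_2} = 4` and `m_{s_i, s_{i+1}} = 3` for `i ≥ 2`. -/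
def Bmat (n : ℕ) : CoxeterMatrix (Fin n) where
  M := Matrix.of fun i j : Fin n ↦
    if i = j then 1
      else (if (i.val = 0 ∧ j.val = 1) ∨ (j.val = 0 ∧ i.val = 1) then 4
        else (if (j : ℕ) + 1 = i ∨ (i : ℕ) + 1 = j then 3 else 2))
  isSymm := by unfold Matrix.IsSymm; aesop
  diagonal := by simp
  off_diagonal := by aesop

/-- The Coxeter matrix of type `Dₙ` with the paper's labelling: vertices `0, …, n-1`
(representing `s_1, …, s_n`), with edges `{s_1, s_3}`, `{s_2, s_3}` and `{s_i, s_{i+1}}`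
for `i ≥ 3`, all labelled `3`. -/
def Dmat (n : ℕ) : CoxeterMatrix (Fin n) where
  M := Matrix.of fun i j : Fin n ↦
    if i = j then 1
      else (if (i.val = 0 ∧ j.val = 2) ∨ (j.val = 0 ∧ i.val = 2) then 3
        else (if i.val = 0 ∨ j.val = 0 then 2
          else (if (j : ℕ) + 1 = i ∨ (i : ℕ) + 1 = j then 3 else 2)))
  isSymm := by unfold Matrix.IsSymm; aesop
  diagonal := by simp
  off_diagonal := by aesop

end ArtinTits

namespace ArtinTits

open Equiv CoxeterMatrix

lemma swap_braid {α : Type*} [DecidableEq α] {a b c : α} (hab : a ≠ b) (hbc : b ≠ c)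
    (hac : a ≠ c) : (swap a b * swap b c) ^ 3 = 1 := by
  have h1 : swap a b * swap b c * (swap a b)⁻¹ = swap a c := by
    rw [← swap_apply_apply, swap_apply_right, swap_apply_of_ne_of_ne hac.symm hbc.symm]
  have h2 : swap b c * swap a b * (swap b c)⁻¹ = swap a c := by
    rw [← swap_apply_apply, swap_apply_of_ne_of_ne hab hac, swap_apply_left]
  rw [swap_inv] at h1 h2
  calc (swap a b * swap b c) ^ 3
      = (swap a b * swap b c * swap a b) * (swap b c * swap a b * swap b c) := by rw [pow_succ, pow_succ, pow_one]; group
    _ = swap a c * swap a c := by rw [h1, h2]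
    _ = 1 := swap_mul_self a c

lemma swap_comm_far {α : Type*} [DecidableEq α] {a b c d : α} (hac : a ≠ c) (had : a ≠ d)
    (hbc : b ≠ c) (hbd : b ≠ d) : (swap a b * swap c d) ^ 2 = 1 := by
  have h1 : swap a b * swap c d * (swap a b)⁻¹ = swap c d := by
    rw [← swap_apply_apply, swap_apply_of_ne_of_ne hac.symm hbc.symm,
      swap_apply_of_ne_of_ne had.symm hbd.symm]
  rw [swap_inv] at h1
  calc (swap a b * swap c d) ^ 2
      = (swap a b * swap c d * swap a b) * swap c d := by rw [pow_succ, pow_one]; group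
    _ = swap c d * swap c d := by rw [h1]
    _ = 1 := swap_mul_self c d

lemma An_apply {n : ℕ} (i j : Fin n) :
    Aₙ n i j = if i = j then 1 else if (j:ℕ)+1=i ∨ (i:ℕ)+1=j then 3 else 2 := rfl

/-- generators to adjacent transpositions -/
def toPermF {n : ℕ} (i : Fin n) : Perm (Fin (n+1)) := swap i.castSucc i.succ

lemma liftable (n : ℕ) : (Aₙ n).IsLiftable toPermF := by
  intro i j
  unfold toPermF
  rw [An_apply]
  by_cases hij : i = j
  · subst hij; simp [pow_one, swap_mul_self]
  · simp only [hij, if_false]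
    by_cases hadj : ((j:ℕ)+1=(i:ℕ) ∨ (i:ℕ)+1=(j:ℕ))
    · simp only [hadj, if_true]
      rcases hadj with h | h
      · have e1 : i.castSucc = j.succ := by ext; simp [← h]
        rw [e1, show swap j.succ i.succ = swap i.succ j.succ from swap_comm _ _,
          show swap j.castSucc j.succ = swap j.succ j.castSucc from swap_comm _ _]
        -- goal : (swap i.succ j.succ * swap j.succ j.castSucc)^3
        exact swap_braid (by simp only [Ne, Fin.ext_iff, Fin.coe_castSucc, Fin.val_succ]; omega) (by simp only [Ne, Fin.ext_iff, Fin.coe_castSucc, Fin.val_succ]; omega)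
          (by simp only [Ne, Fin.ext_iff, Fin.coe_castSucc, Fin.val_succ]; omega)
      · have e1 : j.castSucc = i.succ := by ext; simp [← h]
        rw [e1]
        exact swap_braid (by simp only [Ne, Fin.ext_iff, Fin.coe_castSucc, Fin.val_succ]; omega) (by simp only [Ne, Fin.ext_iff, Fin.coe_castSucc, Fin.val_succ]; omega)
          (by simp only [Ne, Fin.ext_iff, Fin.coe_castSucc, Fin.val_succ]; omega)
    · simp only [hadj, if_false]
      push_neg at hadj
      exact swap_comm_far (by simp only [Ne, Fin.ext_iff, Fin.coe_castSucc, Fin.val_succ]; omega) (by simp only [Ne, Fin.ext_iff, Fin.coe_castSucc, Fin.val_succ]; omega)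
        (by simp only [Ne, Fin.ext_iff, Fin.coe_castSucc, Fin.val_succ]; omega) (by simp only [Ne, Fin.ext_iff, Fin.coe_castSucc, Fin.val_succ]; omega)



section
variable (n : ℕ)

noncomputable def toPerm : (Aₙ n).Group →* Perm (Fin (n+1)) :=
  (Aₙ n).toCoxeterSystem.lift ⟨toPermF, liftable n⟩

@[simp] lemma toPerm_simple (i : Fin n) :
    toPerm n ((Aₙ n).simple i) = swap i.castSucc i.succ := by
  have := (Aₙ n).toCoxeterSystem.lift_apply_simple (liftable n) i
  simpa [toPermF, toPerm] using this

lemma orbit_all (x y : Fin (n+1)) :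
    x ∈ MulAction.orbit (Subgroup.closure (Set.range fun i : Fin n => swap i.castSucc i.succ))
      (y : Fin (n+1)) := by
  set H := Subgroup.closure (Set.range fun i : Fin n => swap i.castSucc i.succ)
  have key : ∀ k : ℕ, ∀ hk : k < n + 1, ∃ σ : H, (σ : Perm (Fin (n+1))) • (0 : Fin (n+1)) = ⟨k, hk⟩ := by
    intro k
    induction k with
    | zero => exact fun hk => ⟨1, rfl⟩
    | succ k ih =>
      intro hk
      obtain ⟨σ, hσ⟩ := ih (by omega)
      have hkn : k < n := by omega
      have hmem : swap (⟨k, by omega⟩ : Fin (n+1)) ⟨k+1, hk⟩ ∈ H := by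
        apply Subgroup.subset_closure
        exact ⟨⟨k, hkn⟩, by congr 1⟩
      refine ⟨⟨swap (⟨k, by omega⟩ : Fin (n+1)) ⟨k+1, hk⟩, hmem⟩ * σ, ?_⟩
      have : ((⟨swap (⟨k, by omega⟩ : Fin (n+1)) ⟨k+1, hk⟩, hmem⟩ * σ : H) : Perm (Fin (n+1))) • (0 : Fin (n+1))
          = swap (⟨k, by omega⟩ : Fin (n+1)) ⟨k+1, hk⟩ • ((σ : Perm (Fin (n+1))) • (0 : Fin (n+1))) := by
        rw [← mul_smul]; rfl
      rw [this, hσ]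
      simp [Perm.smul_def, swap_apply_left]
  obtain ⟨σx, hx⟩ := key x.val x.isLt
  obtain ⟨σy, hy⟩ := key y.val y.isLt
  refine ⟨σx * σy⁻¹, ?_⟩
  have hyy : (⟨y.val, y.isLt⟩ : Fin (n+1)) = y := rfl
  have hy' : σy • (0 : Fin (n+1)) = y := by rw [← hyy, ← hy]; rfl
  have hx' : σx • (0 : Fin (n+1)) = x := by
    have : x = (⟨x.val, x.isLt⟩ : Fin (n+1)) := rfl
    rw [this, ← hx]; rfl
  show (σx * σy⁻¹) • y = x
  rw [mul_smul, ← hy', inv_smul_smul, hx']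

lemma toPerm_surjective : Function.Surjective (toPerm n) := by
  rw [← MonoidHom.range_eq_top, eq_top_iff, ← Equiv.Perm.closure_isSwap,
    Subgroup.closure_le]
  rintro σ ⟨x, y, hxy, rfl⟩
  have hmem : swap x y ∈ Subgroup.closure (Set.range fun i : Fin n => swap i.castSucc i.succ) := by
    rw [swap_mem_closure_isSwap]
    · exact orbit_all n x y
    · rintro f ⟨i, rfl⟩
      exact ⟨i.castSucc, i.succ, by simp [Fin.ext_iff], rfl⟩
  revert hmem
  have hle : Subgroup.closure (Set.range fun i : Fin n => swap i.castSucc i.succ)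
      ≤ (toPerm n).range := by
    rw [Subgroup.closure_le]
    rintro f ⟨i, rfl⟩
    exact ⟨(Aₙ n).simple i, toPerm_simple n i⟩
  exact fun h => hle h
end



section basicW
variable {m : ℕ}

lemma inv_s (a : Fin m) : ((Aₙ m).simple a)⁻¹ = (Aₙ m).simple a :=
  (Aₙ m).toCoxeterSystem.inv_simple a

lemma s_mul_s (a : Fin m) : (Aₙ m).simple a * (Aₙ m).simple a = 1 :=
  (Aₙ m).toCoxeterSystem.simple_mul_simple_self a

lemma simple_comm {a b : Fin m} (h : (a:ℕ) + 1 < b ∨ (b:ℕ) + 1 < a) :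
    (Aₙ m).simple a * (Aₙ m).simple b = (Aₙ m).simple b * (Aₙ m).simple a := by
  have h2 : ((Aₙ m).simple a * (Aₙ m).simple b) ^ (Aₙ m a b) = 1 :=
    (Aₙ m).toCoxeterSystem.simple_mul_simple_pow a b
  have hab : Aₙ m a b = 2 := by
    rw [An_apply]
    have h1 : a ≠ b := by rintro rfl; omega
    rw [if_neg h1, if_neg (by omega)]
  rw [hab] at h2
  have h3 : ((Aₙ m).simple a * (Aₙ m).simple b) * ((Aₙ m).simple a * (Aₙ m).simple b) = 1 := by
    rw [← pow_two]; exact h2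
  have h4 := inv_eq_of_mul_eq_one_right h3
  rw [mul_inv_rev, inv_s, inv_s] at h4
  exact h4.symm

lemma simple_braid {a b : Fin m} (h : (a:ℕ) + 1 = b ∨ (b:ℕ) + 1 = a) :
    (Aₙ m).simple a * (Aₙ m).simple b * (Aₙ m).simple a
    = (Aₙ m).simple b * (Aₙ m).simple a * (Aₙ m).simple b := by
  have h2 : ((Aₙ m).simple a * (Aₙ m).simple b) ^ (Aₙ m a b) = 1 :=
    (Aₙ m).toCoxeterSystem.simple_mul_simple_pow a b
  have hab : Aₙ m a b = 3 := by
    rw [An_apply]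
    have h1 : a ≠ b := by rintro rfl; omega
    rw [if_neg h1, if_pos (by omega)]
  rw [hab] at h2
  set x := (Aₙ m).simple a with hx
  set y := (Aₙ m).simple b with hy
  have h3 : (x*y*x) * (y*x*y) = 1 := by
    calc (x*y*x) * (y*x*y) = (x*y)^3 := by rw [pow_succ, pow_succ, pow_one]; group
    _ = 1 := h2
  have h4 := inv_eq_of_mul_eq_one_right h3
  have h5 : (x*y*x)⁻¹ = x*y*x := by
    rw [mul_inv_rev, mul_inv_rev, hx, hy, inv_s, inv_s]
    group
  calc x*y*x = (x*y*x)⁻¹ := h5.symm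
  _ = y*x*y := h4

end basicW

section card
variable (n : ℕ)

lemma An_castSucc (i j : Fin n) : Aₙ n i j = Aₙ (n+1) i.castSucc j.castSucc := by
  rw [An_apply, An_apply]
  simp only [Fin.ext_iff, Fin.coe_castSucc]

lemma inclA_liftable : (Aₙ n).IsLiftable (fun i => (Aₙ (n+1)).simple i.castSucc) := by
  intro i j
  rw [An_castSucc]
  exact (Aₙ (n+1)).toCoxeterSystem.simple_mul_simple_pow i.castSucc j.castSucc

/-- inclusion of Coxeter groups -/
noncomputable def inclA : (Aₙ n).Group →* (Aₙ (n+1)).Group :=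
  (Aₙ n).toCoxeterSystem.lift ⟨fun i => (Aₙ (n+1)).simple i.castSucc, inclA_liftable n⟩

lemma inclA_simple (i : Fin n) :
    inclA n ((Aₙ n).simple i) = (Aₙ (n+1)).simple i.castSucc :=
  (Aₙ n).toCoxeterSystem.lift_apply_simple (inclA_liftable n) i

/-- descending tails u k = s_n s_{n-1} ... s_{n-k+1} -/
noncomputable def tailU : ℕ → (Aₙ (n+1)).Group
  | 0 => 1
  | (k+1) => tailU k * (Aₙ (n+1)).simple ⟨n - k, by omega⟩

lemma tailU_comm (k : ℕ) (i : Fin (n+1)) (h : (i:ℕ) + 1 < n + 1 - k) :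
    (Aₙ (n+1)).simple i * tailU n k = tailU n k * (Aₙ (n+1)).simple i := by
  induction k with
  | zero => simp [tailU]
  | succ k ih =>
    have h' : (i:ℕ) + 1 < n + 1 - k := by omega
    rw [tailU, ← mul_assoc, ih h', mul_assoc,
      simple_comm (a := i) (b := ⟨n - k, by omega⟩) (by left; show (i:ℕ) + 1 < n - k; omega), mul_assoc]

lemma tailU_shift (k : ℕ) (hk : k ≤ n + 1) (i : Fin (n+1)) (h : n + 1 - k < (i:ℕ)) :
    tailU n k * (Aₙ (n+1)).simple i
    = (Aₙ (n+1)).simple ⟨(i:ℕ) - 1, by omega⟩ * tailU n k := by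
  induction k with
  | zero => omega
  | succ k ih =>
    rcases Nat.lt_or_ge (n + 1 - k) (i:ℕ) with hgt | hle
    · rw [tailU, mul_assoc,
        simple_comm (a := (⟨n - k, by omega⟩ : Fin (n+1))) (b := i) (by left; show (n - k : ℕ) + 1 < (i:ℕ); omega),
        ← mul_assoc, ih (by omega) hgt, mul_assoc]
    · -- i.val = n - k, and k = k'+1
      rcases k with _ | k'
      · omega
      · have hkn : k' + 1 ≤ n := by omega
        have hlta : n - k' < n + 1 := by omega
        have hltb : n - (k'+1) < n + 1 := by omega
        have hia : i = (⟨n - k', hlta⟩ : Fin (n+1)) := by apply Fin.ext; simp; omega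
        have hab : ((⟨n - (k'+1), hltb⟩ : Fin (n+1)) :ℕ) + 1 = ((⟨n - k', hlta⟩ : Fin (n+1)) :ℕ) := by
          simp; omega
        have hi1 : (⟨(i:ℕ) - 1, by omega⟩ : Fin (n+1)) = (⟨n - (k'+1), hltb⟩ : Fin (n+1)) := by
          apply Fin.ext; simp; omega
        have hu2 : tailU n (k'+1+1) = tailU n k' * (Aₙ (n+1)).simple ⟨n - k', hlta⟩ * (Aₙ (n+1)).simple ⟨n - (k'+1), hltb⟩ := by
          rw [tailU, tailU]
        set a : Fin (n+1) := (⟨n - k', hlta⟩ : Fin (n+1))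
        set b : Fin (n+1) := (⟨n - (k'+1), hltb⟩ : Fin (n+1))
        simp only [hu2, hia, hi1]
        have hcomm : ((⟨n - (k'+1), hltb⟩ : Fin (n+1)) : ℕ) + 1 < n + 1 - k' := by simp; omega
        set a : Fin (n+1) := (⟨n - k', hlta⟩ : Fin (n+1)) with ha
        set b : Fin (n+1) := (⟨n - (k'+1), hltb⟩ : Fin (n+1)) with hb
        calc tailU n k' * (Aₙ (n+1)).simple a * (Aₙ (n+1)).simple b * (Aₙ (n+1)).simple a
            = tailU n k' * ((Aₙ (n+1)).simple a * (Aₙ (n+1)).simple b * (Aₙ (n+1)).simple a) := by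
              group
          _ = tailU n k' * ((Aₙ (n+1)).simple b * (Aₙ (n+1)).simple a * (Aₙ (n+1)).simple b) := by
              rw [simple_braid (Or.inr hab)]
          _ = (tailU n k' * (Aₙ (n+1)).simple b) * ((Aₙ (n+1)).simple a * (Aₙ (n+1)).simple b) := by
              group
          _ = ((Aₙ (n+1)).simple b * tailU n k') * ((Aₙ (n+1)).simple a * (Aₙ (n+1)).simple b) := by
              rw [← tailU_comm n k' b hcomm]
          _ = (Aₙ (n+1)).simple b * (tailU n k' * (Aₙ (n+1)).simple a * (Aₙ (n+1)).simple b) := by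
              group

lemma exists_decomp (w : (Aₙ (n+1)).Group) :
    ∃ (g : (Aₙ n).Group) (k : ℕ), k ≤ n + 1 ∧ w = inclA n g * tailU n k := by
  induction w using CoxeterSystem.simple_induction_right (cs := (Aₙ (n+1)).toCoxeterSystem) with
  | one => exact ⟨1, 0, by omega, by simp [tailU]⟩
  | mul_simple_right w i ih =>
    simp only [CoxeterMatrix.toCoxeterSystem_simple]
    obtain ⟨g, k, hk, rfl⟩ := ih
    rcases Nat.lt_trichotomy ((i:ℕ) + 1) (n + 1 - k) with hlt | heq | hgt
    · -- commutes past tail; absorb into g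
      have hi : (i:ℕ) < n := by omega
      refine ⟨g * (Aₙ n).simple ⟨(i:ℕ), hi⟩, k, hk, ?_⟩
      have : (Aₙ (n+1)).simple i * tailU n k = tailU n k * (Aₙ (n+1)).simple i :=
        tailU_comm n k i hlt
      rw [map_mul, inclA_simple]
      have hcs : (Fin.castSucc ⟨(i:ℕ), hi⟩) = i := by apply Fin.ext; simp
      rw [hcs, mul_assoc, ← this, mul_assoc]
    · -- extend tail
      refine ⟨g, k + 1, by omega, ?_⟩
      have h1 : tailU n (k+1) = tailU n k * (Aₙ (n+1)).simple ⟨n - k, by omega⟩ := by rw [tailU]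
      have h2 : i = (⟨n - k, by omega⟩ : Fin (n+1)) := by apply Fin.ext; simp; omega
      simp only [h1, ← mul_assoc, h2]
    · rcases Nat.lt_or_ge (n + 1 - k) (i:ℕ) with hgt2 | hle2
      · -- strict above: shift
        have hsh := tailU_shift n k hk i hgt2
        have hi1 : (i:ℕ) - 1 < n := by omega
        refine ⟨g * (Aₙ n).simple ⟨(i:ℕ) - 1, hi1⟩, k, hk, ?_⟩
        rw [map_mul, inclA_simple, mul_assoc, hsh]
        have hcs : (Fin.castSucc ⟨(i:ℕ) - 1, hi1⟩) = ⟨(i:ℕ) - 1, by omega⟩ := by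
          apply Fin.ext; simp
        rw [hcs, mul_assoc]
      · -- i.val = n + 1 - k : cancel last letter, k ≥ 1
        have hik : (i:ℕ) = n + 1 - k := by omega
        rcases k with _ | k'
        · omega
        · refine ⟨g, k', by omega, ?_⟩
          have h1 : tailU n (k'+1) = tailU n k' * (Aₙ (n+1)).simple ⟨n - k', by omega⟩ := by
            rw [tailU]
          have hia : i = (⟨n - k', by omega⟩ : Fin (n+1)) := by apply Fin.ext; simp; omega
          rw [h1, mul_assoc, mul_assoc, hia, s_mul_s, mul_one]

end card
lemma An_group_finite_and_card (n : ℕ) :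
    Finite ((Aₙ n).Group) ∧ Nat.card ((Aₙ n).Group) ≤ Nat.factorial (n+1) := by
  induction n with
  | zero =>
    have htriv : ∀ w : (Aₙ 0).Group, w = 1 := fun w =>
      ((Aₙ 0).toCoxeterSystem).simple_induction_right (p := fun w => w = 1) w rfl
        (fun w i _ => i.elim0)
    have hsub : Subsingleton ((Aₙ 0).Group) := ⟨fun a b => by rw [htriv a, htriv b]⟩
    have hsurj : Function.Surjective (fun _ : Unit => (1 : (Aₙ 0).Group)) :=
      fun g => ⟨Unit.unit, (htriv g).symm⟩
    refine ⟨Finite.of_surjective _ hsurj, ?_⟩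
    calc Nat.card ((Aₙ 0).Group) ≤ Nat.card Unit := Nat.card_le_card_of_surjective (fun _ : Unit => (1 : (Aₙ 0).Group)) hsurj
    _ = 1 := by simp
    _ ≤ Nat.factorial 1 := by norm_num
  | succ n ih =>
    obtain ⟨hfin, hcard⟩ := ih
    have hsurj : Function.Surjective
        (fun p : ((Aₙ n).Group × Fin (n+2)) => inclA n p.1 * tailU n p.2.val) := by
      intro w
      obtain ⟨g, k, hk, hw⟩ := exists_decomp n w
      exact ⟨(g, ⟨k, by omega⟩), hw.symm⟩
    refine ⟨Finite.of_surjective _ hsurj, ?_⟩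
    calc Nat.card ((Aₙ (n+1)).Group)
        ≤ Nat.card ((Aₙ n).Group × Fin (n+2)) :=
          Nat.card_le_card_of_surjective
            (fun p : ((Aₙ n).Group × Fin (n+2)) => inclA n p.1 * tailU n p.2.val) hsurj
    _ = Nat.card ((Aₙ n).Group) * (n+2) := by
        rw [Nat.card_prod, Nat.card_eq_fintype_card (α := Fin (n+2)), Fintype.card_fin]
    _ ≤ Nat.factorial (n+1) * (n+2) := Nat.mul_le_mul_right _ hcard
    _ = Nat.factorial (n+2) := by rw [Nat.factorial_succ (n+1)]; ring


noncomputable def permEquiv (n : ℕ) : (Aₙ n).Group ≃* Perm (Fin (n+1)) := by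
  have hfin := (An_group_finite_and_card n).1
  have hb : Function.Bijective (toPerm n) :=
    (toPerm_surjective n).bijective_of_nat_card_le (by
      rw [Nat.card_eq_fintype_card (α := Perm (Fin (n+1))), Fintype.card_perm, Fintype.card_fin]
      exact (An_group_finite_and_card n).2)
  exact MulEquiv.ofBijective (toPerm n) hb

lemma permEquiv_simple (n : ℕ) (i : Fin n) :
    permEquiv n ((Aₙ n).simple i) = swap i.castSucc i.succ := toPerm_simple n i


lemma An_apply' {n : ℕ} (i j : Fin n) :
    Aₙ n i j = if i = j then 1 else if (j:ℕ)+1=i ∨ (i:ℕ)+1=j then 3 else 2 := rfl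

section psi
variable {n : ℕ}

/-- membership of a natural number index in a set of `Fin n` -/
def inY (Y : Set (Fin n)) (k : ℕ) : Prop := ∃ hk : k < n, (⟨k, hk⟩ : Fin n) ∈ Y

variable {Y₁ Y₂ : Set (Fin n)}

open Classical in
/-- `ψ` as a function on natural number indices -/
noncomputable def PsiF (ψ : Y₁ ≃ Y₂) (k : ℕ) : ℕ :=
  if h : inY Y₁ k then ((ψ ⟨⟨k, h.choose⟩, h.choose_spec⟩ : Y₂) : Fin n).val else n

lemma PsiF_eq (ψ : Y₁ ≃ Y₂) {k : ℕ} (h : inY Y₁ k) {hk : k < n} (hm : (⟨k, hk⟩ : Fin n) ∈ Y₁) :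
    PsiF ψ k = ((ψ ⟨⟨k, hk⟩, hm⟩ : Y₂) : Fin n).val := by
  rw [PsiF, dif_pos h]

lemma PsiF_coe (ψ : Y₁ ≃ Y₂) (x : Y₁) : PsiF ψ ((x : Fin n) : ℕ) = ((ψ x : Y₂) : Fin n).val := by
  have h : inY Y₁ ((x : Fin n) : ℕ) := ⟨(x : Fin n).isLt, by simpa [Fin.eta] using x.2⟩
  rw [PsiF_eq ψ h (hk := (x : Fin n).isLt) (by simpa [Fin.eta] using x.2)]

lemma PsiF_lt (ψ : Y₁ ≃ Y₂) {k : ℕ} (h : inY Y₁ k) : PsiF ψ k < n := by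
  obtain ⟨hk, hm⟩ := h
  rw [PsiF_eq ψ ⟨hk, hm⟩ hm]
  exact ((ψ _ : Y₂) : Fin n).isLt

lemma PsiF_mem (ψ : Y₁ ≃ Y₂) {k : ℕ} (h : inY Y₁ k) : inY Y₂ (PsiF ψ k) := by
  obtain ⟨hk, hm⟩ := h
  rw [PsiF_eq ψ ⟨hk, hm⟩ hm]
  exact ⟨((ψ _ : Y₂) : Fin n).isLt, by simpa [Fin.eta] using (ψ ⟨⟨k, hk⟩, hm⟩).2⟩

lemma PsiF_symm (ψ : Y₁ ≃ Y₂) {k : ℕ} (h : inY Y₁ k) : PsiF ψ.symm (PsiF ψ k) = k := by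
  obtain ⟨hk, hm⟩ := h
  rw [PsiF_eq ψ ⟨hk, hm⟩ hm]
  rw [PsiF_coe ψ.symm (ψ ⟨⟨k, hk⟩, hm⟩)]
  rw [Equiv.symm_apply_apply]

/-- adjacency of indices -/
def adjN (a b : ℕ) : Prop := a + 1 = b ∨ b + 1 = a

section facts
variable (ψ : Y₁ ≃ Y₂) (hψ : ∀ a b : Y₁, Aₙ n a.val b.val = Aₙ n (ψ a).val (ψ b).val)
include hψ

lemma adj_iff (a b : Y₁) :
    adjN ((a : Fin n) : ℕ) ((b : Fin n) : ℕ)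
      ↔ adjN (((ψ a) : Fin n) : ℕ) (((ψ b) : Fin n) : ℕ) := by
  have h := hψ a b
  by_cases hab : a = b
  · subst hab
    unfold adjN; omega
  · have hab' : (a : Fin n) ≠ (b : Fin n) := fun hc => hab (Subtype.ext hc)
    have hab2 : ((ψ a) : Fin n) ≠ ((ψ b) : Fin n) := fun hc =>
      hab (ψ.injective (Subtype.ext hc))
    rw [An_apply', An_apply', if_neg hab', if_neg hab2] at h
    by_cases h1 : ((b : Fin n) : ℕ)+1=((a : Fin n) : ℕ) ∨ ((a : Fin n) : ℕ)+1=((b : Fin n) : ℕ)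
    · rw [if_pos h1] at h
      by_cases h2 : (((ψ b) : Fin n) : ℕ)+1=(((ψ a) : Fin n) : ℕ)
          ∨ (((ψ a) : Fin n) : ℕ)+1=(((ψ b) : Fin n) : ℕ)
      · unfold adjN; omega
      · rw [if_neg h2] at h; exact absurd h (by norm_num)
    · rw [if_neg h1] at h
      by_cases h2 : (((ψ b) : Fin n) : ℕ)+1=(((ψ a) : Fin n) : ℕ)
          ∨ (((ψ a) : Fin n) : ℕ)+1=(((ψ b) : Fin n) : ℕ)
      · rw [if_pos h2] at h; exact absurd h (by norm_num)
      · unfold adjN; omega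

lemma PsiF_adj {k l : ℕ} (hk : inY Y₁ k) (hl : inY Y₁ l) :
    adjN k l ↔ adjN (PsiF ψ k) (PsiF ψ l) := by
  obtain ⟨hk', hkm⟩ := hk
  obtain ⟨hl', hlm⟩ := hl
  have e1 : PsiF ψ k = ((ψ ⟨⟨k, hk'⟩, hkm⟩ : Y₂) : Fin n).val := PsiF_coe ψ ⟨⟨k, hk'⟩, hkm⟩
  have e2 : PsiF ψ l = ((ψ ⟨⟨l, hl'⟩, hlm⟩ : Y₂) : Fin n).val := PsiF_coe ψ ⟨⟨l, hl'⟩, hlm⟩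
  rw [e1, e2]
  exact adj_iff ψ hψ ⟨⟨k, hk'⟩, hkm⟩ ⟨⟨l, hl'⟩, hlm⟩

lemma PsiF_inj {k l : ℕ} (hk : inY Y₁ k) (hl : inY Y₁ l) (hne : k ≠ l) :
    PsiF ψ k ≠ PsiF ψ l := by
  intro hc
  have := PsiF_symm ψ hk
  rw [hc, PsiF_symm ψ hl] at this
  exact hne this.symm

end facts
end psi
section ff
variable {n : ℕ} {Y₁ Y₂ : Set (Fin n)}

open Classical in
/-- The point map induced by `ψ` -/
noncomputable def FF (ψ : Y₁ ≃ Y₂) (p : ℕ) : ℕ :=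
  if 1 ≤ p ∧ inY Y₁ (p-1) then
    (if inY Y₁ p then max (PsiF ψ (p-1)) (PsiF ψ p)
     else if 2 ≤ p ∧ inY Y₁ (p-2) then
       (if PsiF ψ (p-1) = PsiF ψ (p-2) + 1 then PsiF ψ (p-1) + 1 else PsiF ψ (p-1))
     else PsiF ψ (p-1) + 1)
  else if inY Y₁ p then
    (if inY Y₁ (p+1) then (if PsiF ψ (p+1) = PsiF ψ p + 1 then PsiF ψ p else PsiF ψ p + 1)
     else PsiF ψ p)
  else 0

variable (ψ : Y₁ ≃ Y₂) {p : ℕ}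

lemma FF_LR (h1 : 1 ≤ p) (h2 : inY Y₁ (p-1)) (h3 : inY Y₁ p) :
    FF ψ p = max (PsiF ψ (p-1)) (PsiF ψ p) := by
  rw [FF, if_pos ⟨h1, h2⟩, if_pos h3]

lemma FF_Rrun (h1 : 1 ≤ p) (h2 : inY Y₁ (p-1)) (h3 : ¬ inY Y₁ p) (h4 : 2 ≤ p)
    (h5 : inY Y₁ (p-2)) :
    FF ψ p = if PsiF ψ (p-1) = PsiF ψ (p-2) + 1 then PsiF ψ (p-1) + 1 else PsiF ψ (p-1) := by
  rw [FF, if_pos ⟨h1, h2⟩, if_neg h3, if_pos ⟨h4, h5⟩]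

lemma FF_Rsing (h1 : 1 ≤ p) (h2 : inY Y₁ (p-1)) (h3 : ¬ inY Y₁ p)
    (h4 : ¬ (2 ≤ p ∧ inY Y₁ (p-2))) :
    FF ψ p = PsiF ψ (p-1) + 1 := by
  rw [FF, if_pos ⟨h1, h2⟩, if_neg h3, if_neg h4]

lemma FF_Lrun (h1 : ¬ (1 ≤ p ∧ inY Y₁ (p-1))) (h2 : inY Y₁ p) (h3 : inY Y₁ (p+1)) :
    FF ψ p = if PsiF ψ (p+1) = PsiF ψ p + 1 then PsiF ψ p else PsiF ψ p + 1 := by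
  rw [FF, if_neg h1, if_pos h2, if_pos h3]

lemma FF_Lsing (h1 : ¬ (1 ≤ p ∧ inY Y₁ (p-1))) (h2 : inY Y₁ p) (h3 : ¬ inY Y₁ (p+1)) :
    FF ψ p = PsiF ψ p := by
  rw [FF, if_neg h1, if_pos h2, if_neg h3]

lemma PsiF_symm' {q : ℕ} (hq : inY Y₂ q) : PsiF ψ (PsiF ψ.symm q) = q := by
  have := PsiF_symm (ψ := ψ.symm) hq
  rwa [Equiv.symm_symm] at this

end ff

section roundtrip
variable {n : ℕ} {Y₁ Y₂ : Set (Fin n)} (ψ : Y₁ ≃ Y₂)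
  (hψ : ∀ a b : Y₁, Aₙ n a.val b.val = Aₙ n (ψ a).val (ψ b).val)
include hψ

lemma neighbor {t q' : ℕ} (ht : inY Y₁ t) (hq : inY Y₂ q') (hadj : adjN (PsiF ψ t) q') :
    ∃ l, inY Y₁ l ∧ adjN t l ∧ PsiF ψ l = q' := by
  refine ⟨PsiF ψ.symm q', PsiF_mem ψ.symm hq, ?_, PsiF_symm' ψ hq⟩
  have h2 : PsiF ψ (PsiF ψ.symm q') = q' := PsiF_symm' ψ hq
  exact (PsiF_adj ψ hψ ht (PsiF_mem ψ.symm hq)).2 (by rwa [h2])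

lemma hpsi_symm : ∀ a b : Y₂, Aₙ n a.val b.val = Aₙ n (ψ.symm a).val (ψ.symm b).val := by
  intro a b
  have := hψ (ψ.symm a) (ψ.symm b)
  rw [ψ.apply_symm_apply, ψ.apply_symm_apply] at this
  exact this.symm

lemma FF_round {p : ℕ} (hp : (1 ≤ p ∧ inY Y₁ (p-1)) ∨ inY Y₁ p) :
    ((1 ≤ FF ψ p ∧ inY Y₂ (FF ψ p - 1)) ∨ inY Y₂ (FF ψ p)) ∧ FF ψ.symm (FF ψ p) = p := by
  by_cases hR : 1 ≤ p ∧ inY Y₁ (p-1) <;> by_cases hL : inY Y₁ p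
  · -- both
    obtain ⟨hp1, hm1⟩ := hR
    have hadj : adjN (PsiF ψ (p-1)) (PsiF ψ p) :=
      (PsiF_adj ψ hψ hm1 hL).1 (by unfold adjN; omega)
    have hF : FF ψ p = max (PsiF ψ (p-1)) (PsiF ψ p) := FF_LR ψ hp1 hm1 hL
    have hI2a : inY Y₂ (PsiF ψ (p-1)) := PsiF_mem ψ hm1
    have hI2b : inY Y₂ (PsiF ψ p) := PsiF_mem ψ hL
    have hs1 : PsiF ψ.symm (PsiF ψ (p-1)) = p - 1 := PsiF_symm ψ hm1
    have hs2 : PsiF ψ.symm (PsiF ψ p) = p := PsiF_symm ψ hL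
    rcases hadj with hor | hor
    · -- Ψ(p-1)+1 = Ψ p, F p = Ψ p
      have hq : FF ψ p = PsiF ψ p := by omega
      have hq1 : FF ψ p - 1 = PsiF ψ (p-1) := by omega
      constructor
      · left; exact ⟨by omega, by rw [hq1]; exact hI2a⟩
      · have e : FF ψ.symm (FF ψ p)
            = max (PsiF ψ.symm (FF ψ p - 1)) (PsiF ψ.symm (FF ψ p)) :=
          FF_LR ψ.symm (by omega) (by rw [hq1]; exact hI2a) (by rw [hq]; exact hI2b)
        rw [e, hq1, hq, hs1, hs2]; omega
    · -- Ψ p + 1 = Ψ(p-1), F p = Ψ(p-1)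
      have hq : FF ψ p = PsiF ψ (p-1) := by omega
      have hq1 : FF ψ p - 1 = PsiF ψ p := by omega
      constructor
      · right; rw [hq]; exact hI2a
      · have e : FF ψ.symm (FF ψ p)
            = max (PsiF ψ.symm (FF ψ p - 1)) (PsiF ψ.symm (FF ψ p)) :=
          FF_LR ψ.symm (by omega) (by rw [hq1]; exact hI2b) (by rw [hq]; exact hI2a)
        rw [e, hq1, hq, hs1, hs2]; omega
  · -- R only
    obtain ⟨hp1, hm1⟩ := hR
    have hI2a : inY Y₂ (PsiF ψ (p-1)) := PsiF_mem ψ hm1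
    have hs1 : PsiF ψ.symm (PsiF ψ (p-1)) = p - 1 := PsiF_symm ψ hm1
    by_cases hB : 2 ≤ p ∧ inY Y₁ (p-2)
    · obtain ⟨hp2, hm2⟩ := hB
      have hadj : adjN (PsiF ψ (p-2)) (PsiF ψ (p-1)) :=
        (PsiF_adj ψ hψ hm2 hm1).1 (by unfold adjN; omega)
      have hI2c : inY Y₂ (PsiF ψ (p-2)) := PsiF_mem ψ hm2
      have hs2 : PsiF ψ.symm (PsiF ψ (p-2)) = p - 2 := PsiF_symm ψ hm2
      have hFe : FF ψ p = if PsiF ψ (p-1) = PsiF ψ (p-2) + 1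
          then PsiF ψ (p-1) + 1 else PsiF ψ (p-1) := FF_Rrun ψ hp1 hm1 hL hp2 hm2
      by_cases ht : PsiF ψ (p-1) = PsiF ψ (p-2) + 1
      · have hF : FF ψ p = PsiF ψ (p-1) + 1 := by rw [hFe, if_pos ht]
        have hnot : ¬ inY Y₂ (PsiF ψ (p-1) + 1) := by
          intro hcon
          obtain ⟨l, hl1, hl2, hl3⟩ := neighbor ψ hψ hm1 hcon (by unfold adjN; omega)
          rcases hl2 with he | he
          · exact hL (by rwa [show l = p by omega] at hl1)
          · rw [show l = p - 2 by omega] at hl3; omega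
        constructor
        · left
          exact ⟨by omega, by rw [show FF ψ p - 1 = PsiF ψ (p-1) by omega]; exact hI2a⟩
        · have e : FF ψ.symm (FF ψ p) = if PsiF ψ.symm (FF ψ p - 1) = PsiF ψ.symm (FF ψ p - 2) + 1
              then PsiF ψ.symm (FF ψ p - 1) + 1 else PsiF ψ.symm (FF ψ p - 1) :=
            FF_Rrun ψ.symm (by omega)
              (by rw [show FF ψ p - 1 = PsiF ψ (p-1) by omega]; exact hI2a)
              (by rw [hF]; exact hnot)
              (by omega)
              (by rw [show FF ψ p - 2 = PsiF ψ (p-2) by omega]; exact hI2c)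
          rw [e, show FF ψ p - 1 = PsiF ψ (p-1) by omega,
            show FF ψ p - 2 = PsiF ψ (p-2) by omega, hs1, hs2, if_pos (by omega)]
          omega
      · have hor : PsiF ψ (p-2) = PsiF ψ (p-1) + 1 := by unfold adjN at hadj; omega
        have hF : FF ψ p = PsiF ψ (p-1) := by rw [hFe, if_neg ht]
        have hnotR : ¬ (1 ≤ FF ψ p ∧ inY Y₂ (FF ψ p - 1)) := by
          rintro ⟨hq1, hcon⟩
          obtain ⟨l, hl1, hl2, hl3⟩ := neighbor ψ hψ hm1 (by rwa [hF] at hcon)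
            (by unfold adjN; omega)
          rcases hl2 with he | he
          · exact hL (by rwa [show l = p by omega] at hl1)
          · rw [show l = p - 2 by omega] at hl3; omega
        constructor
        · right; rw [hF]; exact hI2a
        · have e : FF ψ.symm (FF ψ p) = if PsiF ψ.symm (FF ψ p + 1) = PsiF ψ.symm (FF ψ p) + 1
              then PsiF ψ.symm (FF ψ p) else PsiF ψ.symm (FF ψ p) + 1 :=
            FF_Lrun ψ.symm hnotR (by rw [hF]; exact hI2a)
              (by rw [hF, ← hor]; exact hI2c)
          rw [e, hF, ← hor, hs1, hs2, if_neg (by omega)]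
          omega
    · -- R singleton
      have hF : FF ψ p = PsiF ψ (p-1) + 1 := FF_Rsing ψ hp1 hm1 hL hB
      have hnot : ¬ inY Y₂ (PsiF ψ (p-1) + 1) := by
        intro hcon
        obtain ⟨l, hl1, hl2, hl3⟩ := neighbor ψ hψ hm1 hcon (by unfold adjN; omega)
        rcases hl2 with he | he
        · exact hL (by rwa [show l = p by omega] at hl1)
        · exact hB ⟨by omega, by rwa [show p - 2 = l by omega]⟩
      have hnot2 : ¬ (2 ≤ FF ψ p ∧ inY Y₂ (FF ψ p - 2)) := by
        rintro ⟨hq2, hcon⟩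
        obtain ⟨l, hl1, hl2, hl3⟩ := neighbor ψ hψ hm1 hcon (by unfold adjN; omega)
        rcases hl2 with he | he
        · exact hL (by rwa [show l = p by omega] at hl1)
        · exact hB ⟨by omega, by rwa [show p - 2 = l by omega]⟩
      constructor
      · left
        exact ⟨by omega, by rw [show FF ψ p - 1 = PsiF ψ (p-1) by omega]; exact hI2a⟩
      · have e : FF ψ.symm (FF ψ p) = PsiF ψ.symm (FF ψ p - 1) + 1 :=
          FF_Rsing ψ.symm (by omega)
            (by rw [show FF ψ p - 1 = PsiF ψ (p-1) by omega]; exact hI2a)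
            (by rw [hF]; exact hnot) hnot2
        rw [e, show FF ψ p - 1 = PsiF ψ (p-1) by omega, hs1]
        omega
  · -- L only
    have hI2b : inY Y₂ (PsiF ψ p) := PsiF_mem ψ hL
    have hs2 : PsiF ψ.symm (PsiF ψ p) = p := PsiF_symm ψ hL
    by_cases hD : inY Y₁ (p+1)
    · have hadj : adjN (PsiF ψ p) (PsiF ψ (p+1)) :=
        (PsiF_adj ψ hψ hL hD).1 (by unfold adjN; omega)
      have hI2d : inY Y₂ (PsiF ψ (p+1)) := PsiF_mem ψ hD
      have hs3 : PsiF ψ.symm (PsiF ψ (p+1)) = p + 1 := PsiF_symm ψ hD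
      have hFe : FF ψ p = if PsiF ψ (p+1) = PsiF ψ p + 1
          then PsiF ψ p else PsiF ψ p + 1 := FF_Lrun ψ hR hL hD
      by_cases ht : PsiF ψ (p+1) = PsiF ψ p + 1
      · have hF : FF ψ p = PsiF ψ p := by rw [hFe, if_pos ht]
        have hnotR : ¬ (1 ≤ FF ψ p ∧ inY Y₂ (FF ψ p - 1)) := by
          rintro ⟨hq1, hcon⟩
          obtain ⟨l, hl1, hl2, hl3⟩ := neighbor ψ hψ hL (by rwa [hF] at hcon)
            (by unfold adjN; omega)
          rcases hl2 with he | he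
          · rw [show l = p + 1 by omega] at hl3; omega
          · exact hR ⟨by omega, by rwa [show p - 1 = l by omega]⟩
        constructor
        · right; rw [hF]; exact hI2b
        · have e : FF ψ.symm (FF ψ p) = if PsiF ψ.symm (FF ψ p + 1) = PsiF ψ.symm (FF ψ p) + 1
              then PsiF ψ.symm (FF ψ p) else PsiF ψ.symm (FF ψ p) + 1 :=
            FF_Lrun ψ.symm hnotR (by rw [hF]; exact hI2b)
              (by rw [hF, ← ht]; exact hI2d)
          rw [e, hF, ← ht, hs2, hs3, if_pos (by omega)]
      · have hor : PsiF ψ p = PsiF ψ (p+1) + 1 := by unfold adjN at hadj; omega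
        have hF : FF ψ p = PsiF ψ p + 1 := by rw [hFe, if_neg ht]
        have hnot : ¬ inY Y₂ (PsiF ψ p + 1) := by
          intro hcon
          obtain ⟨l, hl1, hl2, hl3⟩ := neighbor ψ hψ hL hcon (by unfold adjN; omega)
          rcases hl2 with he | he
          · rw [show l = p + 1 by omega] at hl3; omega
          · exact hR ⟨by omega, by rwa [show p - 1 = l by omega]⟩
        constructor
        · left
          exact ⟨by omega, by rw [show FF ψ p - 1 = PsiF ψ p by omega]; exact hI2b⟩
        · have e : FF ψ.symm (FF ψ p) = if PsiF ψ.symm (FF ψ p - 1) = PsiF ψ.symm (FF ψ p - 2) + 1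
              then PsiF ψ.symm (FF ψ p - 1) + 1 else PsiF ψ.symm (FF ψ p - 1) :=
            FF_Rrun ψ.symm (by omega)
              (by rw [show FF ψ p - 1 = PsiF ψ p by omega]; exact hI2b)
              (by rw [hF]; exact hnot)
              (by omega)
              (by rw [show FF ψ p - 2 = PsiF ψ (p+1) by omega]; exact hI2d)
          rw [e, show FF ψ p - 1 = PsiF ψ p by omega,
            show FF ψ p - 2 = PsiF ψ (p+1) by omega, hs2, hs3, if_neg (by omega)]
    · -- L singleton
      have hF : FF ψ p = PsiF ψ p := FF_Lsing ψ hR hL hD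
      have hnotR : ¬ (1 ≤ FF ψ p ∧ inY Y₂ (FF ψ p - 1)) := by
        rintro ⟨hq1, hcon⟩
        obtain ⟨l, hl1, hl2, hl3⟩ := neighbor ψ hψ hL (by rwa [hF] at hcon)
          (by unfold adjN; omega)
        rcases hl2 with he | he
        · exact hD (by rwa [show l = p + 1 by omega] at hl1)
        · exact hR ⟨by omega, by rwa [show p - 1 = l by omega]⟩
      have hnotL : ¬ inY Y₂ (FF ψ p + 1) := by
        intro hcon
        obtain ⟨l, hl1, hl2, hl3⟩ := neighbor ψ hψ hL (by rwa [hF] at hcon)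
          (by unfold adjN; omega)
        rcases hl2 with he | he
        · exact hD (by rwa [show l = p + 1 by omega] at hl1)
        · exact hR ⟨by omega, by rwa [show p - 1 = l by omega]⟩
      constructor
      · right; rw [hF]; exact hI2b
      · have e : FF ψ.symm (FF ψ p) = PsiF ψ.symm (FF ψ p) :=
          FF_Lsing ψ.symm hnotR (by rw [hF]; exact hI2b) hnotL
        rw [e, hF, hs2]
  · rcases hp with h | h
    · exact absurd h hR
    · exact absurd h hL

lemma FF_pair {k : ℕ} (hk : inY Y₁ k) :
    (FF ψ k = PsiF ψ k ∧ FF ψ (k+1) = PsiF ψ k + 1)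
    ∨ (FF ψ k = PsiF ψ k + 1 ∧ FF ψ (k+1) = PsiF ψ k) := by
  have e1 : (k+1) - 1 = k := by omega
  by_cases hm : 1 ≤ k ∧ inY Y₁ (k-1) <;> by_cases hp : inY Y₁ (k+1)
  · -- run middle : k-1, k, k+1 ∈ Y₁
    obtain ⟨hk1, hkm⟩ := hm
    have hadj1 : adjN (PsiF ψ (k-1)) (PsiF ψ k) :=
      (PsiF_adj ψ hψ hkm hk).1 (by unfold adjN; omega)
    have hadj2 : adjN (PsiF ψ k) (PsiF ψ (k+1)) :=
      (PsiF_adj ψ hψ hk hp).1 (by unfold adjN; omega)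
    have hnadj : ¬ adjN (PsiF ψ (k-1)) (PsiF ψ (k+1)) := by
      intro hcon
      have := (PsiF_adj ψ hψ hkm hp).2 hcon
      unfold adjN at this; omega
    have hne : PsiF ψ (k-1) ≠ PsiF ψ (k+1) := PsiF_inj ψ hψ hkm hp (by omega)
    have hF1 : FF ψ k = max (PsiF ψ (k-1)) (PsiF ψ k) := FF_LR ψ hk1 hkm hk
    have hF2 : FF ψ (k+1) = max (PsiF ψ ((k+1)-1)) (PsiF ψ (k+1)) :=
      FF_LR ψ (by omega) (by rwa [e1]) hp
    rw [e1] at hF2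
    unfold adjN at hadj1 hadj2 hnadj
    omega
  · -- run end at k : k-1, k ∈ Y₁, k+1 ∉ Y₁
    obtain ⟨hk1, hkm⟩ := hm
    have hadj1 : adjN (PsiF ψ (k-1)) (PsiF ψ k) :=
      (PsiF_adj ψ hψ hkm hk).1 (by unfold adjN; omega)
    have hF1 : FF ψ k = max (PsiF ψ (k-1)) (PsiF ψ k) := FF_LR ψ hk1 hkm hk
    have hF2 : FF ψ (k+1) = if PsiF ψ ((k+1)-1) = PsiF ψ ((k+1)-2) + 1
        then PsiF ψ ((k+1)-1) + 1 else PsiF ψ ((k+1)-1) :=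
      FF_Rrun ψ (by omega) (by rwa [e1]) hp (by omega) (by rwa [show (k+1)-2 = k-1 by omega])
    rw [e1, show (k+1)-2 = k-1 by omega] at hF2
    by_cases ht : PsiF ψ k = PsiF ψ (k-1) + 1
    · rw [if_pos ht] at hF2
      unfold adjN at hadj1; omega
    · rw [if_neg ht] at hF2
      unfold adjN at hadj1; omega
  · -- run start at k : k-1 ∉, k, k+1 ∈ Y₁
    have hadj2 : adjN (PsiF ψ k) (PsiF ψ (k+1)) :=
      (PsiF_adj ψ hψ hk hp).1 (by unfold adjN; omega)
    have hF1 : FF ψ k = if PsiF ψ (k+1) = PsiF ψ k + 1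
        then PsiF ψ k else PsiF ψ k + 1 := FF_Lrun ψ hm hk hp
    have hF2 : FF ψ (k+1) = max (PsiF ψ ((k+1)-1)) (PsiF ψ (k+1)) :=
      FF_LR ψ (by omega) (by rwa [e1]) hp
    rw [e1] at hF2
    by_cases ht : PsiF ψ (k+1) = PsiF ψ k + 1
    · rw [if_pos ht] at hF1; unfold adjN at hadj2; omega
    · rw [if_neg ht] at hF1; unfold adjN at hadj2; omega
  · -- singleton
    have hF1 : FF ψ k = PsiF ψ k := FF_Lsing ψ hm hk hp
    have hF2 : FF ψ (k+1) = PsiF ψ ((k+1)-1) + 1 :=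
      FF_Rsing ψ (by omega) (by rwa [e1]) hp
        (by rintro ⟨h2, hcon⟩; exact hm ⟨by omega, by rwa [show k-1 = (k+1)-2 by omega]⟩)
    rw [e1] at hF2
    left; exact ⟨hF1, hF2⟩

lemma FF_le {p : ℕ} (hp : (1 ≤ p ∧ inY Y₁ (p-1)) ∨ inY Y₁ p) : FF ψ p ≤ n := by
  rcases (FF_round ψ hψ hp).1 with ⟨h1, h2⟩ | h2
  · have := h2.choose
    omega
  · have := h2.choose
    omega

end roundtrip

section final
variable {n : ℕ} {Y₁ Y₂ : Set (Fin n)}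

/-- the set of points touched by the transpositions indexed by `Y` -/
def PSet (Y : Set (Fin n)) : Set (Fin (n+1)) :=
  {p | (1 ≤ (p:ℕ) ∧ inY Y ((p:ℕ)-1)) ∨ inY Y (p:ℕ)}

variable (ψ : Y₁ ≃ Y₂)
  (hψ : ∀ a b : Y₁, Aₙ n a.val b.val = Aₙ n (ψ a).val (ψ b).val)
include hψ

lemma exists_perm : ∃ π : Perm (Fin (n+1)), ∀ y : Y₁,
    swap (π ((y : Fin n).castSucc)) (π ((y : Fin n).succ))
      = swap (((ψ y : Y₂) : Fin n).castSucc) (((ψ y : Y₂) : Fin n).succ) := by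
  classical
  have hψ' := hpsi_symm ψ hψ
  -- the equivalence between the touched point sets
  have hlt : ∀ p : ↥(PSet Y₁), FF ψ ((p : Fin (n+1)) : ℕ) < n + 1 :=
    fun p => Nat.lt_succ_of_le (FF_le ψ hψ p.2)
  have hlt' : ∀ q : ↥(PSet Y₂), FF ψ.symm ((q : Fin (n+1)) : ℕ) < n + 1 :=
    fun q => Nat.lt_succ_of_le (FF_le ψ.symm hψ' q.2)
  let e : ↥(PSet Y₁) ≃ ↥(PSet Y₂) :=
    { toFun := fun p => ⟨⟨FF ψ ((p : Fin (n+1)) : ℕ), hlt p⟩, (FF_round ψ hψ p.2).1⟩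
      invFun := fun q => ⟨⟨FF ψ.symm ((q : Fin (n+1)) : ℕ), hlt' q⟩, by
        exact (FF_round ψ.symm hψ' q.2).1⟩
      left_inv := fun p => by
        apply Subtype.ext; apply Fin.ext
        exact (FF_round ψ hψ p.2).2
      right_inv := fun q => by
        apply Subtype.ext; apply Fin.ext
        have := (FF_round ψ.symm hψ' q.2).2
        rwa [Equiv.symm_symm] at this }
  have hcompl : Fintype.card ↥((PSet Y₁)ᶜ) = Fintype.card ↥((PSet Y₂)ᶜ) := by
    rw [Fintype.card_compl_set, Fintype.card_compl_set, Fintype.card_congr e]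
  let e' : ↥((PSet Y₁)ᶜ) ≃ ↥((PSet Y₂)ᶜ) := Fintype.equivOfCardEq hcompl
  let π : Perm (Fin (n+1)) :=
    (Equiv.Set.sumCompl (PSet Y₁)).symm.trans ((e.sumCongr e').trans
      (Equiv.Set.sumCompl (PSet Y₂)))
  have hπ : ∀ (p : Fin (n+1)) (hp : p ∈ PSet Y₁), π p = ((e ⟨p, hp⟩ : ↥(PSet Y₂)) : Fin (n+1)) := by
    intro p hp
    show (Equiv.Set.sumCompl (PSet Y₂)) ((e.sumCongr e') ((Equiv.Set.sumCompl (PSet Y₁)).symm p)) = _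
    rw [Equiv.Set.sumCompl_symm_apply_of_mem hp]
    rfl
  refine ⟨π, fun y => ?_⟩
  have hky : inY Y₁ ((y : Fin n) : ℕ) := ⟨(y : Fin n).isLt, by rw [Fin.eta]; exact y.2⟩
  have ha : (y : Fin n).castSucc ∈ PSet Y₁ := Or.inr (by simpa using hky)
  have hb : (y : Fin n).succ ∈ PSet Y₁ := Or.inl ⟨by simp, by simpa using hky⟩
  have hπa : π ((y : Fin n).castSucc) = ⟨FF ψ ((y : Fin n) : ℕ), by
      have := hlt ⟨(y : Fin n).castSucc, ha⟩
      simpa using this⟩ := by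
    rw [hπ _ ha]
    apply Fin.ext
    simp [e]
  have hπb : π ((y : Fin n).succ) = ⟨FF ψ (((y : Fin n) : ℕ)+1), by
      have := hlt ⟨(y : Fin n).succ, hb⟩
      simpa using this⟩ := by
    rw [hπ _ hb]
    apply Fin.ext
    simp [e]
  have hcoe : PsiF ψ ((y : Fin n) : ℕ) = (((ψ y : Y₂) : Fin n) : ℕ) := PsiF_coe ψ y
  rcases FF_pair ψ hψ hky with ⟨h1, h2⟩ | ⟨h1, h2⟩
  · have e1 : π ((y : Fin n).castSucc) = ((ψ y : Y₂) : Fin n).castSucc := by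
      rw [hπa]; apply Fin.ext; simp; omega
    have e2 : π ((y : Fin n).succ) = ((ψ y : Y₂) : Fin n).succ := by
      rw [hπb]; apply Fin.ext; simp; omega
    rw [e1, e2]
  · have e1 : π ((y : Fin n).castSucc) = ((ψ y : Y₂) : Fin n).succ := by
      rw [hπa]; apply Fin.ext; simp; omega
    have e2 : π ((y : Fin n).succ) = ((ψ y : Y₂) : Fin n).castSucc := by
      rw [hπb]; apply Fin.ext; simp; omega
    rw [e1, e2, Equiv.swap_comm]

end final

open CoxeterMatrix in
/-- Lemma 2(i) of the paper for type `A`: any isomorphism of induced labeled Coxeter graphs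
between two subsets of the standard generators of the Coxeter group of type `Aₙ` (the symmetric
group) is induced by conjugation by an element of the group. -/
theorem typeA_labeled_graph_iso_is_inner
    (n : ℕ) (hn : 1 ≤ n) (Y₁ Y₂ : Set (Fin n)) (ψ : Y₁ ≃ Y₂)
    (hψ : ∀ a b : Y₁, Aₙ n a.val b.val = Aₙ n (ψ a).val (ψ b).val) :
    ∃ v : (Aₙ n).Group,
      ∀ y : Y₁, v⁻¹ * (Aₙ n).simple y.val * v = (Aₙ n).simple (ψ y).val := by
  obtain ⟨π, hπ⟩ := exists_perm ψ hψ
  refine ⟨(permEquiv n).symm π⁻¹, fun y => ?_⟩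
  apply (permEquiv n).injective
  rw [map_mul, map_mul, map_inv, MulEquiv.apply_symm_apply, permEquiv_simple,
    permEquiv_simple, inv_inv, ← Equiv.swap_apply_apply]
  exact hπ y

end ArtinTits
end

section
/- Let A_S be the Artin-Tits group of type E_6 with generators σ_1,…,σ_6, and let X = {s_2, s_3, s_4, s_5, s_6} (a standard parabolic subset of type D_5). Then the elements g = σ_2σ_4σ_3 and h = σ_5σ_4σ_3 are conjugate in A_S but are not conjugate in the standard parabolic subgroup A_X generated by {σ_2, σ_3, σ_4, σ_5, σ_6}. In particular, A_X is not conjugacy stable in A_S. -/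
namespace ArtinTits

open CoxeterMatrix
open scoped Matrix

set_option maxRecDepth 4000

lemma map_altProd {G H : Type*} [Monoid G] [Monoid H] (φ : G →* H) (a b : G) :
    ∀ n, φ (altProd a b n) = altProd (φ a) (φ b) n
  | 0 => by simp [altProd]
  | n + 1 => by rw [altProd, map_mul, map_altProd φ b a n]; rfl

variable {B : Type*}

lemma braid_eq (M : CoxeterMatrix B) (s t : B) (h : M s t ≠ 0) :
    altProd (σ M s) (σ M t) (M s t) = altProd (σ M t) (σ M s) (M s t) := by
  let π := QuotientGroup.mk' (Subgroup.normalClosure (artinRelationsSet M))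
  have h1 : π (altProd (FreeGroup.of s) (FreeGroup.of t) (M s t) *
      (altProd (FreeGroup.of t) (FreeGroup.of s) (M s t))⁻¹) = 1 := by
    rw [QuotientGroup.mk'_apply, QuotientGroup.eq_one_iff]
    exact Subgroup.subset_normalClosure ⟨s, t, h, rfl⟩
  rw [map_mul, map_inv, map_altProd, map_altProd, mul_inv_eq_one] at h1
  exact h1

lemma braid3 {s t : Fin 6} (h : E₆ s t = 3) :
    σ E₆ s * (σ E₆ t * σ E₆ s) = σ E₆ t * (σ E₆ s * σ E₆ t) := by
  have h0 : E₆ s t ≠ 0 := by rw [h]; norm_num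
  have h1 := braid_eq E₆ s t h0
  rw [h] at h1
  simpa [altProd] using h1

lemma comm2 {s t : Fin 6} (h : E₆ s t = 2) : σ E₆ s * σ E₆ t = σ E₆ t * σ E₆ s := by
  have h0 : E₆ s t ≠ 0 := by rw [h]; norm_num
  have h1 := braid_eq E₆ s t h0
  rw [h] at h1
  simpa [altProd] using h1

/-! ### Part 1 : word combinatorics -/

/-- Product of the word `l` of standard generators. -/
def wp (l : List (Fin 6)) : ArtinGroup E₆ := (l.map (σ E₆)).prod

lemma wp_cons (i : Fin 6) (l : List (Fin 6)) : wp (i :: l) = σ E₆ i * wp l := by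
  simp [wp]

lemma wp_append (l m : List (Fin 6)) : wp (l ++ m) = wp l * wp m := by
  simp [wp]

lemma stepL (p q l r : List (Fin 6)) (h : wp l = wp r) :
    wp (p ++ l ++ q) = wp (p ++ r ++ q) := by
  simp only [wp, List.map_append, List.prod_append]
  rw [show (l.map (σ E₆)).prod = (r.map (σ E₆)).prod from h]

lemma braidL (s t : Fin 6) (h : E₆ s t = 3) : wp [s, t, s] = wp [t, s, t] := by
  simpa [wp, mul_assoc] using braid3 h

lemma commL (s t : Fin 6) (h : E₆ s t = 2) : wp [s, t] = wp [t, s] := by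
  simpa [wp] using comm2 h

lemma conjA : wp [1, 0, 2, 3, 4, 1, 3, 2, 0] = wp [0, 2, 3, 4, 1, 3, 2, 0, 4] := by
  calc wp ([1, 0, 2, 3, 4, 1, 3, 2, 0] : List (Fin 6))
    _ = wp [1, 0, 2, 3, 1, 4, 3, 2, 0] := stepL [1, 0, 2, 3] [3, 2, 0] [4, 1] [1, 4] (commL 4 1 (by decide))
    _ = wp [0, 1, 2, 3, 1, 4, 3, 2, 0] := stepL [] [2, 3, 1, 4, 3, 2, 0] [1, 0] [0, 1] (commL 1 0 (by decide))
    _ = wp [0, 2, 1, 3, 1, 4, 3, 2, 0] := stepL [0] [3, 1, 4, 3, 2, 0] [1, 2] [2, 1] (commL 1 2 (by decide))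
    _ = wp [0, 2, 3, 1, 3, 4, 3, 2, 0] := stepL [0, 2] [4, 3, 2, 0] [1, 3, 1] [3, 1, 3] (braidL 1 3 (by decide))
    _ = wp [0, 2, 3, 1, 4, 3, 4, 2, 0] := stepL [0, 2, 3, 1] [2, 0] [3, 4, 3] [4, 3, 4] (braidL 3 4 (by decide))
    _ = wp [0, 2, 3, 1, 4, 3, 2, 4, 0] := stepL [0, 2, 3, 1, 4, 3] [0] [4, 2] [2, 4] (commL 4 2 (by decide))
    _ = wp [0, 2, 3, 1, 4, 3, 2, 0, 4] := stepL [0, 2, 3, 1, 4, 3, 2] [] [4, 0] [0, 4] (commL 4 0 (by decide))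
    _ = wp [0, 2, 3, 4, 1, 3, 2, 0, 4] := stepL [0, 2, 3] [3, 2, 0, 4] [1, 4] [4, 1] (commL 1 4 (by decide))

lemma conjB : wp [2, 0, 2, 3, 4, 1, 3, 2, 0] = wp [0, 2, 3, 4, 1, 3, 2, 0, 2] := by
  calc wp ([2, 0, 2, 3, 4, 1, 3, 2, 0] : List (Fin 6))
    _ = wp [2, 0, 2, 3, 1, 4, 3, 2, 0] := stepL [2, 0, 2, 3] [3, 2, 0] [4, 1] [1, 4] (commL 4 1 (by decide))
    _ = wp [0, 2, 0, 3, 1, 4, 3, 2, 0] := stepL [] [3, 1, 4, 3, 2, 0] [2, 0, 2] [0, 2, 0] (braidL 2 0 (by decide))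
    _ = wp [0, 2, 3, 0, 1, 4, 3, 2, 0] := stepL [0, 2] [1, 4, 3, 2, 0] [0, 3] [3, 0] (commL 0 3 (by decide))
    _ = wp [0, 2, 3, 0, 4, 1, 3, 2, 0] := stepL [0, 2, 3, 0] [3, 2, 0] [1, 4] [4, 1] (commL 1 4 (by decide))
    _ = wp [0, 2, 3, 4, 0, 1, 3, 2, 0] := stepL [0, 2, 3] [1, 3, 2, 0] [0, 4] [4, 0] (commL 0 4 (by decide))
    _ = wp [0, 2, 3, 4, 1, 0, 3, 2, 0] := stepL [0, 2, 3, 4] [3, 2, 0] [0, 1] [1, 0] (commL 0 1 (by decide))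
    _ = wp [0, 2, 3, 4, 1, 3, 0, 2, 0] := stepL [0, 2, 3, 4, 1] [2, 0] [0, 3] [3, 0] (commL 0 3 (by decide))
    _ = wp [0, 2, 3, 4, 1, 3, 2, 0, 2] := stepL [0, 2, 3, 4, 1, 3] [] [0, 2, 0] [2, 0, 2] (braidL 0 2 (by decide))

lemma conjC : wp [3, 0, 2, 3, 4, 1, 3, 2, 0] = wp [0, 2, 3, 4, 1, 3, 2, 0, 3] := by
  calc wp ([3, 0, 2, 3, 4, 1, 3, 2, 0] : List (Fin 6))
    _ = wp [3, 0, 2, 3, 1, 4, 3, 2, 0] := stepL [3, 0, 2, 3] [3, 2, 0] [4, 1] [1, 4] (commL 4 1 (by decide))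
    _ = wp [0, 3, 2, 3, 1, 4, 3, 2, 0] := stepL [] [2, 3, 1, 4, 3, 2, 0] [3, 0] [0, 3] (commL 3 0 (by decide))
    _ = wp [0, 2, 3, 2, 1, 4, 3, 2, 0] := stepL [0] [1, 4, 3, 2, 0] [3, 2, 3] [2, 3, 2] (braidL 3 2 (by decide))
    _ = wp [0, 2, 3, 2, 4, 1, 3, 2, 0] := stepL [0, 2, 3, 2] [3, 2, 0] [1, 4] [4, 1] (commL 1 4 (by decide))
    _ = wp [0, 2, 3, 4, 2, 1, 3, 2, 0] := stepL [0, 2, 3] [1, 3, 2, 0] [2, 4] [4, 2] (commL 2 4 (by decide))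
    _ = wp [0, 2, 3, 4, 1, 2, 3, 2, 0] := stepL [0, 2, 3, 4] [3, 2, 0] [2, 1] [1, 2] (commL 2 1 (by decide))
    _ = wp [0, 2, 3, 4, 1, 3, 2, 3, 0] := stepL [0, 2, 3, 4, 1] [0] [2, 3, 2] [3, 2, 3] (braidL 2 3 (by decide))
    _ = wp [0, 2, 3, 4, 1, 3, 2, 0, 3] := stepL [0, 2, 3, 4, 1, 3, 2] [] [3, 0] [0, 3] (commL 3 0 (by decide))

/-- The conjugating element. -/
def cw : ArtinGroup E₆ := wp [0, 2, 3, 4, 1, 3, 2, 0]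

lemma cw_conj1 : cw⁻¹ * σ E₆ 1 * cw = σ E₆ 4 := by
  have h : σ E₆ 1 * cw = cw * σ E₆ 4 := by
    have := conjA
    rw [show ([1, 0, 2, 3, 4, 1, 3, 2, 0] : List (Fin 6)) =
        [(1 : Fin 6)] ++ [0, 2, 3, 4, 1, 3, 2, 0] from rfl,
      show ([0, 2, 3, 4, 1, 3, 2, 0, 4] : List (Fin 6)) =
        [0, 2, 3, 4, 1, 3, 2, 0] ++ [(4 : Fin 6)] from rfl,
      wp_append, wp_append] at this
    simpa [wp, cw] using this
  rw [mul_assoc, h, ← mul_assoc, inv_mul_cancel, one_mul]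

lemma cw_conj2 : cw⁻¹ * σ E₆ 2 * cw = σ E₆ 2 := by
  have h : σ E₆ 2 * cw = cw * σ E₆ 2 := by
    have := conjB
    rw [show ([2, 0, 2, 3, 4, 1, 3, 2, 0] : List (Fin 6)) =
        [(2 : Fin 6)] ++ [0, 2, 3, 4, 1, 3, 2, 0] from rfl,
      show ([0, 2, 3, 4, 1, 3, 2, 0, 2] : List (Fin 6)) =
        [0, 2, 3, 4, 1, 3, 2, 0] ++ [(2 : Fin 6)] from rfl,
      wp_append, wp_append] at this
    simpa [wp, cw] using this
  rw [mul_assoc, h, ← mul_assoc, inv_mul_cancel, one_mul]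

lemma cw_conj3 : cw⁻¹ * σ E₆ 3 * cw = σ E₆ 3 := by
  have h : σ E₆ 3 * cw = cw * σ E₆ 3 := by
    have := conjC
    rw [show ([3, 0, 2, 3, 4, 1, 3, 2, 0] : List (Fin 6)) =
        [(3 : Fin 6)] ++ [0, 2, 3, 4, 1, 3, 2, 0] from rfl,
      show ([0, 2, 3, 4, 1, 3, 2, 0, 3] : List (Fin 6)) =
        [0, 2, 3, 4, 1, 3, 2, 0] ++ [(3 : Fin 6)] from rfl,
      wp_append, wp_append] at this
    simpa [wp, cw] using this
  rw [mul_assoc, h, ← mul_assoc, inv_mul_cancel, one_mul]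

lemma part1 : cw⁻¹ * (σ E₆ 1 * σ E₆ 3 * σ E₆ 2) * cw = σ E₆ 4 * σ E₆ 3 * σ E₆ 2 := by
  have e : cw⁻¹ * (σ E₆ 1 * σ E₆ 3 * σ E₆ 2) * cw =
      (cw⁻¹ * σ E₆ 1 * cw) * (cw⁻¹ * σ E₆ 3 * cw) * (cw⁻¹ * σ E₆ 2 * cw) := by
    group
  rw [e, cw_conj1, cw_conj2, cw_conj3]

/-! ### Part 2 : a linear representation over `ZMod 2` -/

abbrev Mx := Matrix (Fin 6) (Fin 6) (ZMod 2)

def Sm : Fin 6 → Mx := ![!![1, 0, 1, 0, 0, 0; 0, 1, 0, 0, 0, 0; 0, 0, 1, 0, 0, 0; 0, 0, 0, 1, 0, 0; 0, 0, 0, 0, 1, 0; 0, 0, 0, 0, 0, 1], !![1, 0, 0, 0, 0, 0; 0, 1, 0, 1, 0, 0; 0, 0, 1, 0, 0, 0; 0, 0, 0, 1, 0, 0; 0, 0, 0, 0, 1, 0; 0, 0, 0, 0, 0, 1], !![1, 0, 0, 0, 0, 0; 0, 1, 0, 0, 0, 0; 1, 0, 1, 1, 0, 0; 0, 0, 0,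 1, 0, 0; 0, 0, 0, 0, 1, 0; 0, 0, 0, 0, 0, 1], !![1, 0, 0, 0, 0, 0; 0, 1, 0, 0, 0, 0; 0, 0, 1, 0, 0, 0; 0, 1, 1, 1, 1, 0; 0, 0, 0, 0, 1, 0; 0, 0, 0, 0, 0, 1], !![1, 0, 0, 0, 0, 0; 0, 1, 0, 0, 0, 0; 0, 0, 1, 0, 0, 0; 0, 0, 0, 1, 0, 0; 0, 0, 0, 1, 1, 1; 0, 0, 0, 0, 0, 1], !![1, 0, 0, 0, 0, 0; 0, 1, 0, 0, 0, 0; 0, 0, 1, 0, 0, 0; 0, 0, 0, 1, 0, 0; 0, 0, 0, 0, 1, 0; 0, 0, 0, 0, 1, 1]]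

lemma Sm_sq : ∀ i : Fin 6, Sm i * Sm i = 1 := by decide

/-- The generators as units. -/
def fu : Fin 6 → Mxˣ := fun i => ⟨Sm i, Sm i, Sm_sq i, Sm_sq i⟩

lemma altProd_val (u v : Mxˣ) (n : ℕ) :
    ((altProd u v n : Mxˣ) : Mx) = altProd (u : Mx) (v : Mx) n :=
  map_altProd (Units.coeHom Mx) u v n

lemma relcheck : ∀ r ∈ artinRelationsSet E₆, FreeGroup.lift fu r = 1 := by
  rintro r ⟨s, t, h, rfl⟩
  rw [map_mul, map_inv, map_altProd, map_altProd, mul_inv_eq_one]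
  simp only [FreeGroup.lift_apply_of]
  apply Units.ext
  rw [altProd_val, altProd_val]
  revert s t
  intro s t
  fin_cases s <;> fin_cases t <;> decide

/-- The representation of the Artin group. -/
def φ : ArtinGroup E₆ →* Mxˣ := PresentedGroup.toGroup relcheck

lemma φ_of (i : Fin 6) : φ (σ E₆ i) = fu i := PresentedGroup.toGroup.of relcheck

/-- The parabolic-fixed vector `3ω₁ mod 2`. -/
def vv : Fin 6 → ZMod 2 := ![0, 1, 1, 0, 0, 0]

lemma vfix : ∀ i : Fin 6, i ≠ 0 → Sm i *ᵥ vv = vv := by decide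

/-- The witness vector with `(ρ(g) - 1) w₀ = v`. -/
def w0 : Fin 6 → ZMod 2 := ![0, 0, 0, 1, 1, 0]

lemma gSolv : (Sm 1 * Sm 3 * Sm 2) *ᵥ w0 = vv + w0 := by decide

lemma hNoSolv : ∀ w : Fin 6 → ZMod 2, (Sm 4 * Sm 3 * Sm 2) *ᵥ w ≠ vv + w := by decide

/-- The subgroup of units fixing `vv`. -/
def K : Subgroup Mxˣ where
  carrier := {u | (u : Mx) *ᵥ vv = vv ∧ ((u⁻¹ : Mxˣ) : Mx) *ᵥ vv = vv}
  one_mem' := by simp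
  mul_mem' := by
    rintro a b ⟨ha1, ha2⟩ ⟨hb1, hb2⟩
    constructor
    · rw [Units.val_mul, ← Matrix.mulVec_mulVec, hb1, ha1]
    · rw [mul_inv_rev, Units.val_mul, ← Matrix.mulVec_mulVec, ha2, hb2]
  inv_mem' := by
    rintro a ⟨ha1, ha2⟩
    exact ⟨ha2, by rwa [inv_inv]⟩

lemma mapsK : ∀ c ∈ AP E₆ ({1, 2, 3, 4, 5} : Set (Fin 6)), φ c ∈ K := by
  intro c hc
  have hle : AP E₆ ({1, 2, 3, 4, 5} : Set (Fin 6)) ≤ K.comap φ := by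
    apply Subgroup.closure_le _ |>.2
    rintro _ ⟨i, hi, rfl⟩
    have hi0 : i ≠ 0 := by
      rcases hi with h | h | h | h | h <;> subst h <;> decide
    have hv := vfix i hi0
    simp only [SetLike.mem_coe, Subgroup.mem_comap, φ_of]
    exact ⟨hv, hv⟩
  exact hle hc

lemma part2 : ¬ ∃ c ∈ AP E₆ ({1, 2, 3, 4, 5} : Set (Fin 6)),
    c⁻¹ * (σ E₆ 1 * σ E₆ 3 * σ E₆ 2) * c = σ E₆ 4 * σ E₆ 3 * σ E₆ 2 := by
  rintro ⟨c, hc, hconj⟩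
  have hK := mapsK c hc
  obtain ⟨hU, hV⟩ := hK
  -- push the conjugation equation to matrices
  have hm : ((φ c)⁻¹ : Mxˣ).val * (Sm 1 * Sm 3 * Sm 2) * (φ c).val
      = Sm 4 * Sm 3 * Sm 2 := by
    have h1 : (φ c)⁻¹ * (fu 1 * fu 3 * fu 2) * φ c = fu 4 * fu 3 * fu 2 := by
      have h2 := congrArg φ hconj
      simpa only [map_mul, map_inv, φ_of] using h2
    have hm' := congrArg Units.val h1
    simp only [Units.val_mul] at hm'
    exact hm'
  set U : Mx := (φ c).val with hUdef
  set V : Mx := ((φ c)⁻¹ : Mxˣ).val with hVdef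
  have hUV : U * V = 1 := by
    rw [hUdef, hVdef, ← Units.val_mul, mul_inv_cancel, Units.val_one]
  apply hNoSolv (V *ᵥ w0)
  calc (Sm 4 * Sm 3 * Sm 2) *ᵥ (V *ᵥ w0)
      = (V * (Sm 1 * Sm 3 * Sm 2) * U) *ᵥ (V *ᵥ w0) := by rw [hm]
    _ = V *ᵥ ((Sm 1 * Sm 3 * Sm 2) *ᵥ ((U * V) *ᵥ w0)) := by
        simp [Matrix.mulVec_mulVec, Matrix.mul_assoc]
    _ = V *ᵥ ((Sm 1 * Sm 3 * Sm 2) *ᵥ w0) := by rw [hUV, Matrix.one_mulVec]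
    _ = V *ᵥ (vv + w0) := by rw [gSolv]
    _ = vv + V *ᵥ w0 := by rw [Matrix.mulVec_add, hV]


/-- Counterexample (a) of the paper: in the Artin–Tits group of type `E₆` (vertices `0,…,5`
standing for `s_1,…,s_6`), the elements `g = σ_2 σ_4 σ_3` and `h = σ_5 σ_4 σ_3` of the standard
parabolic subgroup of type `D₅` on `{s_2,…,s_6}` are conjugate in `A_S` but not in `A_X`; in
particular `A_X` is not conjugacy stable in `A_S`. -/
theorem E6_D5_not_conjugacy_stable :
    (∃ c : ArtinGroup E₆,
        c⁻¹ * (σ E₆ 1 * σ E₆ 3 * σ E₆ 2) * c = σ E₆ 4 * σ E₆ 3 * σ E₆ 2) ∧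
    (¬ ∃ c ∈ AP E₆ ({1, 2, 3, 4, 5} : Set (Fin 6)),
        c⁻¹ * (σ E₆ 1 * σ E₆ 3 * σ E₆ 2) * c = σ E₆ 4 * σ E₆ 3 * σ E₆ 2) ∧
    ¬ IsConjugacyStable (AP E₆ ({1, 2, 3, 4, 5} : Set (Fin 6))) := by
  refine ⟨⟨cw, part1⟩, part2, ?_⟩
  intro hst
  have hmem : ∀ i : Fin 6, i ∈ ({1, 2, 3, 4, 5} : Set (Fin 6)) →
      σ E₆ i ∈ AP E₆ ({1, 2, 3, 4, 5} : Set (Fin 6)) := by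
    intro i hi
    exact Subgroup.subset_closure ⟨i, hi, rfl⟩
  have hg : σ E₆ 1 * σ E₆ 3 * σ E₆ 2 ∈ AP E₆ ({1, 2, 3, 4, 5} : Set (Fin 6)) := by
    exact mul_mem (mul_mem (hmem 1 (by norm_num)) (hmem 3 (by norm_num)))
      (hmem 2 (by norm_num))
  have hh : σ E₆ 4 * σ E₆ 3 * σ E₆ 2 ∈ AP E₆ ({1, 2, 3, 4, 5} : Set (Fin 6)) := by
    exact mul_mem (mul_mem (hmem 4 (by norm_num)) (hmem 3 (by norm_num)))
      (hmem 2 (by norm_num))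
  obtain ⟨d, hd, hde⟩ := hst _ _ hg hh ⟨cw, part1⟩
  exact part2 ⟨d, hd, hde⟩

end ArtinTits
end
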